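/- Suppose α is irrational and m,n are integers with |m|≠|n|. Then there is no measure-preserving invertible map of the circle ℝ/ℤ conjugating the rotation R_{mα} to R_{nα}; equivalently, if the equality e^{2πiαm} = e^{±2πiαn} of spectral generators held, then αm ≡ ±αn (mod ℤ), contradicting irrationality of α. Hence in any group of AIETs, a relation b a^m b^{-1} = a^n with a an infinite order restricted rotation of parameter ratio α forces |m|=|n|. -/

import Mathlib

open Set Filter Function MeasureTheory Topology

noncomputable section

/-- Right derivative of `f` at `x`. -/
def rightD (f : ℝ → ℝ) (x : ℝ) : ℝ := derivWithin f (Set.Ici x) x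

/-- Left derivative of `f` at `x`. -/
def leftD (f : ℝ → ℝ) (x : ℝ) : ℝ := derivWithin f (Set.Iic x) x

/-- Break points of `f` on `[0,1)`: the point `0` together with the
discontinuities of `f` and of its (right) derivative in `(0,1)`. -/
def BP (f : ℝ → ℝ) : Set ℝ :=
  {0} ∪ {x ∈ Set.Ioo (0:ℝ) 1 |
    Function.leftLim f x ≠ f x ∨ Function.leftLim (rightD f) x ≠ rightD f x}

/-- An affine interval exchange transformation of `[0,1)`, modelled as a map of `ℝ`
that is the identity outside `[0,1)`, a bijection of `[0,1)` onto itself, and affine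
with positive slope on the pieces of some finite subdivision `0 = a 0 < ... < a p = 1`. -/
structure IsAIET (f : ℝ → ℝ) : Prop where
  bijOn : Set.BijOn f (Set.Ico 0 1) (Set.Ico 0 1)
  id_outside : ∀ x, x ∉ Set.Ico (0:ℝ) 1 → f x = x
  piecewise : ∃ (p : ℕ) (a : ℕ → ℝ), 0 < p ∧ a 0 = 0 ∧ a p = 1 ∧
    (∀ i j, i < j → j ≤ p → a i < a j) ∧
    ∀ i < p, ∃ lam beta : ℝ, 0 < lam ∧
      ∀ x ∈ Set.Ico (a i) (a (i+1)), f x = lam * x + beta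

/-- The jump of slopes of `f` at `x` : `σ_f(x) = D₊f(x)/D₋f(x)` for `x ∈ (0,1)`, and
`σ_f(0) = D₊f(0)/D₋f(1)`. -/
def jump (f : ℝ → ℝ) (x : ℝ) : ℝ :=
  if x = 0 then rightD f 0 / leftD f 1 else rightD f x / leftD f x

/-- The jump of values of `f` at `x` : `Δ_f(x) = f₊(x) - f₋(x)` for `x ∈ (0,1)`
(here `f₊(x) = f(x)` since AIETs are right-continuous), and `Δ_f(0) = f₊(0) - f₋(1)`. -/
def Δjump (f : ℝ → ℝ) (x : ℝ) : ℝ :=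
  if x = 0 then f 0 - Function.leftLim f 1 else f x - Function.leftLim f x

/-- A PL-homeomorphism of `[0,1)` : an AIET which, seen on the circle `[0,1]/(0=1)`,
is a homeomorphism; equivalently at any interior discontinuity the value jumps from `1` to `0`. -/
def IsPLHomeo (f : ℝ → ℝ) : Prop :=
  IsAIET f ∧ ∀ x ∈ Set.Ioo (0:ℝ) 1,
    Function.leftLim f x ≠ f x → f x = 0 ∧ Function.leftLim f x = 1

/-- Word length of `g` with respect to the finite set `S` (letters in `S ∪ S⁻¹`). -/
def wordLength {G : Type*} [Group G] (S : Finset G) (g : G) : ℕ :=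
  sInf {n : ℕ | ∃ w : Fin n → G, (∀ i, w i ∈ S ∨ (w i)⁻¹ ∈ S) ∧ (List.ofFn w).prod = g}

/-- The restricted rotation of `I = [a,b)` by `δ` (the identity outside `I`). -/
def RR (a b δ : ℝ) (x : ℝ) : ℝ :=
  if x ∈ Set.Ico a (b - δ) then x + δ
  else if x ∈ Set.Ico (b - δ) b then x + δ - (b - a) else x

namespace Stmt19Aux

open AddCircle

lemma fourier_hom {k : ℤ} {x y : AddCircle (1:ℝ)} :
    (fourier k (x + y) : ℂ) = fourier k x * fourier k y := by
  rw [fourier_apply, fourier_apply, fourier_apply, zsmul_add, AddCircle.toCircle_add,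
    Circle.coe_mul]

/-- Core spectral lemma: a measurable map of the circle intertwining the rotations by `u`
and `v` forces `v` to be an integer multiple of `u`. -/
lemma key (u v : AddCircle (1:ℝ)) (T : AddCircle (1:ℝ) → AddCircle (1:ℝ))
    (hmeas : Measurable T) (hconj : ∀ x, T (x + u) = T x + v) : ∃ k : ℤ, k • u = v := by
  by_contra hcon
  push_neg at hcon
  haveI : Fact ((0:ℝ) < 1) := ⟨one_pos⟩
  have hvol : (haarAddCircle : Measure (AddCircle (1:ℝ))) = volume := by
    rw [AddCircle.volume_eq_smul_haarAddCircle]; simp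
  set g : AddCircle (1:ℝ) → ℂ := fun x => fourier 1 (T x) with hg
  have hgmeas : Measurable g := (map_continuous (fourier 1)).measurable.comp hmeas
  have hgnorm : ∀ x, ‖g x‖ = 1 := fun x => Circle.norm_coe _
  have hmem : MemLp g 2 haarAddCircle :=
    MemLp.of_bound hgmeas.aestronglyMeasurable 1
      (Filter.Eventually.of_forall fun x => (hgnorm x).le)
  have hfuv : ∀ k : ℤ, (fourier (-k) u * fourier 1 v : ℂ) ≠ 1 := by
    intro k hk1
    apply hcon k
    have h2 : (fourier k u : ℂ) * (fourier (-k) u * fourier 1 v) = fourier k u := by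
      rw [hk1, mul_one]
    rw [← mul_assoc, ← fourier_add] at h2
    simp only [add_neg_cancel, fourier_zero, one_mul] at h2
    rw [fourier_apply, fourier_apply] at h2
    have h3 := injective_toCircle (one_ne_zero : (1:ℝ) ≠ 0) (Subtype.coe_injective h2)
    simpa using h3.symm
  have hck : ∀ k : ℤ, fourierCoeff g k = (fourier (-k) u * fourier 1 v) * fourierCoeff g k := by
    intro k
    have h1 : fourierCoeff g k = ∫ x, fourier (-k) (x + u) • g (x + u) ∂haarAddCircle := by
      rw [fourierCoeff, hvol]
      exact (integral_add_right_eq_self (μ := volume)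
        (fun x => (fourier (-k) x : ℂ) • g x) u).symm
    have h2 : ∀ x : AddCircle (1:ℝ), fourier (-k) (x + u) • g (x + u)
        = (fourier (-k) u * fourier 1 v) • ((fourier (-k) x : ℂ) • g x) := by
      intro x
      have e2 : g (x + u) = g x * fourier 1 v := by
        show (fourier 1 (T (x+u)) : ℂ) = _
        rw [hconj x, fourier_hom]
      simp only [smul_eq_mul, fourier_hom, e2]
      ring
    calc fourierCoeff g k = ∫ x, fourier (-k) (x + u) • g (x + u) ∂haarAddCircle := h1
      _ = ∫ x, (fourier (-k) u * fourier 1 v) • ((fourier (-k) x : ℂ) • g x) ∂haarAddCircle := by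
          simp_rw [h2]
      _ = (fourier (-k) u * fourier 1 v) • ∫ x, (fourier (-k) x : ℂ) • g x ∂haarAddCircle :=
          integral_smul _ _
      _ = (fourier (-k) u * fourier 1 v) * fourierCoeff g k := rfl
  have hzero : ∀ k, fourierCoeff g k = 0 := by
    intro k
    by_contra h3
    refine hfuv k (mul_right_cancel₀ h3 ?_)
    rw [one_mul]
    exact (hck k).symm
  set G := hmem.toLp g with hGdef
  have hG0 : G = 0 := by
    have h4 : fourierBasis.repr G = 0 := by
      ext i
      rw [fourierBasis_repr]
      have h5 : fourierCoeff (⇑G) i = fourierCoeff g i := by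
        unfold fourierCoeff
        apply integral_congr_ae
        filter_upwards [hmem.coeFn_toLp] with x hx
        rw [hx]
      simp [h5, hzero i]
    exact (LinearIsometryEquiv.map_eq_zero_iff _).mp h4
  have hae : g =ᵐ[(haarAddCircle : Measure (AddCircle (1:ℝ)))] 0 := by
    have h1 := hmem.coeFn_toLp
    rw [← hGdef, hG0] at h1
    exact h1.symm.trans (Lp.coeFn_zero ℂ 2 _)
  haveI : (ae (haarAddCircle : Measure (AddCircle (1:ℝ)))).NeBot :=
    ae_neBot.mpr (IsProbabilityMeasure.ne_zero _)
  obtain ⟨x, hx⟩ := hae.exists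
  have h6 := hgnorm x
  rw [hx] at h6
  simp at h6

lemma coe_one_zero : (((1:ℝ)) : AddCircle (1:ℝ)) = 0 := by
  have := AddCircle.coe_add_period (1:ℝ) 0
  simpa using this

lemma coe_int_eq_zero {α : ℝ} (hα : Irrational α) {c : ℤ}
    (h : (((c:ℝ) * α : ℝ) : AddCircle (1:ℝ)) = 0) : c = 0 := by
  rw [AddCircle.coe_eq_zero_iff] at h
  obtain ⟨z, hz⟩ := h
  simp only [zsmul_eq_mul, mul_one] at hz
  by_contra hc
  refine hα ⟨(z:ℚ) / (c:ℚ), ?_⟩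
  have hc' : (c:ℝ) ≠ 0 := Int.cast_ne_zero.mpr hc
  push_cast
  rw [div_eq_iff hc', hz]; ring

lemma coe_mul_eq {α : ℝ} (hα : Irrational α) {c d : ℤ}
    (h : (((c:ℝ) * α : ℝ) : AddCircle (1:ℝ)) = (((d:ℝ) * α : ℝ) : AddCircle (1:ℝ))) : c = d := by
  have h2 : ((((c - d : ℤ):ℝ) * α : ℝ) : AddCircle (1:ℝ)) = 0 := by
    push_cast
    rw [sub_mul, AddCircle.coe_sub, h, sub_self]
  have := coe_int_eq_zero hα h2
  omega

lemma numk {m n k k' : ℤ} (h1 : k * m = n) (h2 : k' * n = m) : |m| = |n| := by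
  rcases eq_or_ne m 0 with rfl | hm
  · simp [← h1]
  · have h3 : (k' * k) * m = 1 * m := by rw [mul_assoc, h1, h2, one_mul]
    have h5 : k' * k = 1 := mul_right_cancel₀ hm h3
    rcases Int.mul_eq_one_iff_eq_one_or_neg_one.mp h5 with ⟨_, hk⟩ | ⟨_, hk⟩ <;>
      subst hk <;> simp [← h1, abs_neg, neg_one_mul]

lemma aiet_measurable {f : ℝ → ℝ} (h : IsAIET f) : Measurable f := by
  obtain ⟨p, A, hp, hA0, hAp, hmono, hpiece⟩ := h.piecewise
  have hmono' : ∀ i j, i ≤ j → j ≤ p → A i ≤ A j := by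
    intro i j hij hjp
    rcases eq_or_lt_of_le hij with rfl | h'
    · exact le_rfl
    · exact (hmono _ _ h' hjp).le
  have hsub : ∀ i, i < p → Set.Ico (A i) (A (i+1)) ⊆ Set.Ico (0:ℝ) 1 := by
    intro i hi x hx
    have h1 : A 0 ≤ A i := hmono' 0 i (Nat.zero_le _) hi.le
    have h2 : A (i+1) ≤ A p := hmono' (i+1) p hi le_rfl
    exact ⟨le_trans (hA0 ▸ h1) hx.1, lt_of_lt_of_le hx.2 (hAp ▸ h2)⟩
  have cover : ∀ x ∈ Set.Ico (0:ℝ) 1, ∃ i, i < p ∧ x ∈ Set.Ico (A i) (A (i+1)) := by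
    intro x hx
    classical
    set S := (Finset.range (p+1)).filter (fun i => A i ≤ x) with hS
    have hne : S.Nonempty := ⟨0, by simp [hS, hA0, hx.1]⟩
    set i := S.max' hne with hi
    have hiS : i ∈ S := S.max'_mem hne
    have hip : i ≤ p := by
      have := (Finset.mem_filter.mp hiS).1
      rw [Finset.mem_range] at this; omega
    have hAi : A i ≤ x := (Finset.mem_filter.mp hiS).2
    have hilt : i < p := by
      rcases lt_or_eq_of_le hip with h' | h'
      · exact h'
      · exfalso; rw [h', hAp] at hAi; exact absurd hx.2 (not_lt.mpr hAi)
    refine ⟨i, hilt, hAi, ?_⟩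
    by_contra hlt
    push_neg at hlt
    have hmem : i + 1 ∈ S := by
      simp only [hS, Finset.mem_filter, Finset.mem_range]
      exact ⟨by omega, hlt⟩
    have := S.le_max' _ hmem
    omega
  intro s hs
  have hdecomp : f ⁻¹' s = (s ∩ (Set.Ico (0:ℝ) 1)ᶜ) ∪
      ⋃ i ∈ Finset.range p, (f ⁻¹' s ∩ Set.Ico (A i) (A (i+1))) := by
    ext x
    by_cases hx : x ∈ Set.Ico (0:ℝ) 1
    · simp only [Set.mem_union, Set.mem_inter_iff, Set.mem_compl_iff, Set.mem_preimage,
        Set.mem_iUnion, Finset.mem_range, exists_prop]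
      constructor
      · intro hfx
        obtain ⟨i, hip, hxi⟩ := cover x hx
        exact Or.inr ⟨i, hip, hfx, hxi⟩
      · rintro (⟨_, hxc⟩ | ⟨i, _, hfx, _⟩)
        · exact absurd hx hxc
        · exact hfx
    · simp only [Set.mem_union, Set.mem_inter_iff, Set.mem_compl_iff, Set.mem_preimage,
        Set.mem_iUnion, Finset.mem_range, exists_prop]
      rw [h.id_outside x hx]
      constructor
      · intro hxs; exact Or.inl ⟨hxs, hx⟩
      · rintro (⟨hxs, _⟩ | ⟨i, hip, _, hxi⟩)
        · exact hxs
        · exact absurd (hsub i hip hxi) hx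
  rw [hdecomp]
  refine MeasurableSet.union (hs.inter measurableSet_Ico.compl) ?_
  refine Finset.measurableSet_biUnion _ ?_
  intro i hi
  rw [Finset.mem_range] at hi
  obtain ⟨lam, beta, hlam, hfx⟩ := hpiece i hi
  have heq : f ⁻¹' s ∩ Set.Ico (A i) (A (i+1)) =
      (fun x => lam * x + beta) ⁻¹' s ∩ Set.Ico (A i) (A (i+1)) := by
    ext x
    simp only [Set.mem_inter_iff, Set.mem_preimage]
    constructor
    · rintro ⟨h1, h2⟩; rw [hfx x h2] at h1; exact ⟨h1, h2⟩
    · rintro ⟨h1, h2⟩; rw [hfx x h2]; exact ⟨h1, h2⟩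
  rw [heq]
  exact (((measurable_id.const_mul lam).add_const beta) hs).inter measurableSet_Ico

lemma perm_inv_measurable (b : Equiv.Perm ℝ) (hb : Measurable ⇑b) : Measurable ⇑b⁻¹ := by
  have he : MeasurableEmbedding ⇑b := hb.measurableEmbedding b.injective
  intro s hs
  have himg : ⇑b⁻¹ ⁻¹' s = ⇑b '' s := by
    ext y
    simp only [Set.mem_preimage, Set.mem_image]
    constructor
    · intro hy; exact ⟨b⁻¹ y, hy, b.apply_symm_apply y⟩
    · rintro ⟨x, hx, rfl⟩; rwa [Equiv.Perm.coe_inv, b.symm_apply_apply]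
  rw [himg]
  exact he.measurableSet_image.mpr hs

lemma perm_fix_zpow (g : Equiv.Perm ℝ) (x : ℝ) (hgx : g x = x) : ∀ k : ℤ, (g ^ k) x = x := by
  have hinv : g⁻¹ x = x := by
    nth_rewrite 1 [← hgx]
    exact g.symm_apply_apply x
  intro k
  induction k using Int.induction_on with
  | zero => simp
  | succ i ih => rw [zpow_add_one, Equiv.Perm.mul_apply, hgx, ih]
  | pred i ih => rw [zpow_sub_one, Equiv.Perm.mul_apply, hinv, ih]

end Stmt19Aux

open Stmt19Aux AddCircle in
theorem stmt_19 (α : ℝ) (hα : Irrational α) :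
    (∀ m n : ℤ, |m| ≠ |n| →
      ¬ ∃ T : AddCircle (1:ℝ) ≃ᵐ AddCircle (1:ℝ),
        MeasurePreserving ⇑T volume volume ∧
        ∀ x : AddCircle (1:ℝ),
          T (x + (((m : ℝ) * α : ℝ) : AddCircle (1:ℝ))) =
            T x + (((n : ℝ) * α : ℝ) : AddCircle (1:ℝ))) ∧
    (∀ (l r δ : ℝ) (a b : Equiv.Perm ℝ) (m n : ℤ),
      l < r → 0 < δ → δ < r - l → δ / (r - l) = α →
      Set.Ico l r ⊆ Set.Ico (0:ℝ) 1 →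
      IsAIET ⇑a → IsAIET ⇑b →
      (∀ x, a x = RR l r δ x) →
      b * a ^ m * b⁻¹ = a ^ n → |m| = |n|) := by
  haveI : Fact ((0:ℝ) < 1) := ⟨one_pos⟩
  constructor
  · rintro m n hmn ⟨T, hTpres, hconj⟩
    obtain ⟨k, hk⟩ := key _ _ ⇑T T.measurable hconj
    have hkm : k * m = n := by
      apply coe_mul_eq hα
      rw [show (((k * m : ℤ):ℝ) : ℝ) * α = (k : ℤ) • ((m:ℝ) * α) by push_cast [zsmul_eq_mul]; ring]
      rw [AddCircle.coe_zsmul, hk]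
    have hconj' : ∀ y, T.symm (y + (((n : ℝ) * α : ℝ) : AddCircle (1:ℝ)))
        = T.symm y + (((m : ℝ) * α : ℝ) : AddCircle (1:ℝ)) := by
      intro y
      have h1 := hconj (T.symm y)
      rw [T.apply_symm_apply] at h1
      rw [← h1, T.symm_apply_apply]
    obtain ⟨k', hk'⟩ := key _ _ ⇑T.symm T.symm.measurable hconj'
    have hkn : k' * n = m := by
      apply coe_mul_eq hα
      rw [show (((k' * n : ℤ):ℝ) : ℝ) * α = (k' : ℤ) • ((n:ℝ) * α) by push_cast [zsmul_eq_mul]; ring]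
      rw [AddCircle.coe_zsmul, hk']
    exact hmn (numk hkm hkn)
  · intro l r δ a b m n hlr hδ hδL hδα hIsub ha hb haRR hBab
    have hL : (0:ℝ) < r - l := by linarith
    set π : ℝ → AddCircle (1:ℝ) := fun x => (((x - l)/(r-l) : ℝ) : AddCircle (1:ℝ)) with hπdef
    set ψ : AddCircle (1:ℝ) → ℝ := fun q => l + (r-l) * (equivIco (1:ℝ) 0 q : ℝ) with hψdef
    -- basic facts about the restricted rotation a
    have F1 : ∀ x ∈ Set.Ico l r, a x ∈ Set.Ico l r ∧
        π (a x) = π x + ((α : ℝ) : AddCircle (1:ℝ)) := by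
      intro x hx
      obtain ⟨hxl, hxr⟩ := hx
      rw [haRR x]
      by_cases hx1 : x ∈ Set.Ico l (r - δ)
      · rw [RR, if_pos hx1]
        refine ⟨⟨by linarith, by linarith [hx1.2]⟩, ?_⟩
        show (((x + δ - l)/(r-l) : ℝ) : AddCircle (1:ℝ)) = _
        have harg : (x + δ - l)/(r-l) = (x - l)/(r-l) + δ/(r-l) := by
          rw [← add_div]; ring_nf
        rw [harg, AddCircle.coe_add, hδα]
      · have hx2 : r - δ ≤ x := by
          by_contra hcon
          exact hx1 ⟨hxl, by linarith⟩
        rw [RR, if_neg hx1, if_pos ⟨hx2, hxr⟩]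
        refine ⟨⟨by linarith, by linarith⟩, ?_⟩
        show (((x + δ - (r - l) - l)/(r-l) : ℝ) : AddCircle (1:ℝ)) = _
        have harg : (x + δ - (r - l) - l)/(r-l) = ((x - l)/(r-l) + δ/(r-l)) - 1 := by
          field_simp
          ring_nf
        rw [harg, AddCircle.coe_sub, AddCircle.coe_add, hδα, coe_one_zero, sub_zero]
    have F2 : ∀ x, x ∉ Set.Ico l r → a x = x := by
      intro x hx
      rw [haRR x, RR, if_neg, if_neg]
      · intro hc
        exact hx ⟨by linarith [hc.1], hc.2⟩
      · intro hc
        exact hx ⟨hc.1, by linarith [hc.2]⟩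
    have F2' : ∀ (k : ℤ) (x : ℝ), x ∉ Set.Ico l r → (a ^ k) x = x :=
      fun k x hx => perm_fix_zpow a x (F2 x hx) k
    have F3 : ∀ k : ℤ, ∀ x ∈ Set.Ico l r, (a ^ k) x ∈ Set.Ico l r ∧
        π ((a ^ k) x) = π x + ((((k:ℝ) * α : ℝ)) : AddCircle (1:ℝ)) := by
      intro k
      induction k using Int.induction_on with
      | zero =>
        intro x hx
        refine ⟨by simpa using hx, ?_⟩
        norm_num
      | succ i ih =>
        intro x hx
        have h1 : (a ^ ((i:ℤ)+1)) x = (a ^ (i:ℤ)) (a x) := by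
          rw [zpow_add_one]
          rfl
        obtain ⟨hmem1, hπ1⟩ := F1 x hx
        obtain ⟨hmem2, hπ2⟩ := ih (a x) hmem1
        rw [h1]
        refine ⟨hmem2, ?_⟩
        rw [hπ2, hπ1, add_assoc, ← AddCircle.coe_add]
        congr 1
        push_cast
        ring
      | pred i ih =>
        intro x hx
        have hmem0 : (a ^ (-(i:ℤ))) x ∈ Set.Ico l r := (ih x hx).1
        have hchainEq : a * a ^ (-(i:ℤ) - 1) = a ^ (-(i:ℤ)) := by
          rw [← zpow_one_add]
          congr 1
          ring
        have hchain : (a ^ (-(i:ℤ))) x = a ((a ^ (-(i:ℤ) - 1)) x) := by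
          rw [← hchainEq]
          rfl
        have hyIco : (a ^ (-(i:ℤ) - 1)) x ∈ Set.Ico l r := by
          by_contra hy'
          have h2 : a ((a ^ (-(i:ℤ) - 1)) x) = (a ^ (-(i:ℤ) - 1)) x := F2 _ hy'
          rw [h2] at hchain
          exact hy' (hchain ▸ hmem0)
        refine ⟨hyIco, ?_⟩
        obtain ⟨_, hπay⟩ := F1 _ hyIco
        have heq1 : π ((a ^ (-(i:ℤ) - 1)) x) + ((α : ℝ) : AddCircle (1:ℝ))
            = π x + ((((-(i:ℤ) : ℤ):ℝ) * α : ℝ) : AddCircle (1:ℝ)) := by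
          rw [← hπay, ← hchain, (ih x hx).2]
        have heq2 : π ((a ^ (-(i:ℤ) - 1)) x)
            = π x + ((((-(i:ℤ) : ℤ):ℝ) * α : ℝ) : AddCircle (1:ℝ)) - ((α : ℝ) : AddCircle (1:ℝ)) :=
          eq_sub_of_add_eq heq1
        rw [heq2, add_sub_assoc, ← AddCircle.coe_sub]
        congr 1
        push_cast
        ring
    -- pointwise forms of the relation
    have hrel1 : ∀ x, b ((a ^ m) x) = (a ^ n) (b x) := by
      intro x
      have h1 : (b * a ^ m * b⁻¹) (b x) = (a ^ n) (b x) := by rw [hBab]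
      simpa [Equiv.Perm.mul_apply, Equiv.symm_apply_apply] using h1
    have hrel2 : ∀ y, (a ^ m) (b⁻¹ y) = b⁻¹ ((a ^ n) y) := by
      intro y
      have h1 : (b * a ^ m * b⁻¹) y = (a ^ n) y := by rw [hBab]
      have h2 := congrArg (⇑b⁻¹) h1
      simpa [Equiv.Perm.mul_apply, Equiv.symm_apply_apply] using h2
    have hfix : ∀ k : ℤ, (∃ x ∈ Set.Ico l r, (a ^ k) x = x) → k = 0 := by
      rintro k ⟨x, hx, hke⟩
      have h1 := (F3 k x hx).2
      rw [hke] at h1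
      exact coe_int_eq_zero hα (left_eq_add.mp h1)
    have hlmem : l ∈ Set.Ico l r := ⟨le_refl l, hlr⟩
    by_cases hm : m = 0
    · subst hm
      have h1 : a ^ n = 1 := by rw [← hBab]; group
      have h2 : n = 0 := hfix n ⟨l, hlmem, by rw [h1]; rfl⟩
      rw [h2]
    by_cases hn : n = 0
    · exfalso
      subst hn
      have h1 : a ^ m = 1 := by
        have h2 : a ^ m = b⁻¹ * (b * a ^ m * b⁻¹) * b := by group
        rw [hBab] at h2
        rw [h2]; group
      exact hm (hfix m ⟨l, hlmem, by rw [h1]; rfl⟩)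
    -- b preserves [l, r) and its complement
    have hbout : ∀ x, x ∉ Set.Ico l r → b x ∉ Set.Ico l r := by
      intro x hx hbx
      have h1 := hrel1 x
      rw [F2' m x hx] at h1
      exact hn (hfix n ⟨b x, hbx, h1.symm⟩)
    have hbinvout : ∀ y, y ∉ Set.Ico l r → b⁻¹ y ∉ Set.Ico l r := by
      intro y hy hby
      have h1 := hrel2 y
      rw [F2' n y hy] at h1
      exact hm (hfix m ⟨b⁻¹ y, hby, h1⟩)
    have hbIco : ∀ x ∈ Set.Ico l r, b x ∈ Set.Ico l r := by
      intro x hx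
      by_contra hbx
      have h1 := hbinvout (b x) hbx
      rw [Equiv.Perm.coe_inv, Equiv.symm_apply_apply] at h1
      exact h1 hx
    have hbinvIco : ∀ y ∈ Set.Ico l r, b⁻¹ y ∈ Set.Ico l r := by
      intro y hy
      by_contra hby
      have h1 := hbout (b⁻¹ y) hby
      rw [Equiv.Perm.coe_inv, Equiv.apply_symm_apply] at h1
      exact h1 hy
    -- the coordinate maps
    have hψmem : ∀ q, ψ q ∈ Set.Ico l r := by
      intro q
      have h2 : (equivIco (1:ℝ) 0 q : ℝ) ∈ Set.Ico (0:ℝ) 1 := by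
        simpa using (equivIco (1:ℝ) 0 q).2
      constructor
      · have := mul_nonneg hL.le h2.1
        simp only [hψdef]
        linarith
      · have := (mul_lt_mul_iff_right₀ hL).mpr h2.2
        simp only [hψdef]
        linarith
    have hπψ : ∀ q, π (ψ q) = q := by
      intro q
      show (((l + (r-l) * (equivIco (1:ℝ) 0 q : ℝ) - l)/(r-l) : ℝ) : AddCircle (1:ℝ)) = q
      have harg : (l + (r-l) * (equivIco (1:ℝ) 0 q : ℝ) - l)/(r-l) = (equivIco (1:ℝ) 0 q : ℝ) := by
        field_simp
        ring
      rw [harg]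
      exact (equivIco (1:ℝ) 0).symm_apply_apply q
    have hψπ : ∀ x ∈ Set.Ico l r, ψ (π x) = x := by
      intro x hx
      have hmem : (x - l)/(r-l) ∈ Set.Ico (0:ℝ) 1 :=
        ⟨div_nonneg (by linarith [hx.1]) hL.le, (div_lt_one hL).mpr (by linarith [hx.2])⟩
      have h1 : (equivIco (1:ℝ) 0 (((x - l)/(r-l) : ℝ) : AddCircle (1:ℝ)) : ℝ) = (x - l)/(r-l) := by
        have := liftIco_coe_apply (f := id) (p := (1:ℝ)) (a := 0) (by simpa using hmem)
        simpa [liftIco] using this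
      show l + (r-l) * (equivIco (1:ℝ) 0 (((x - l)/(r-l) : ℝ) : AddCircle (1:ℝ)) : ℝ) = x
      rw [h1]
      field_simp
      ring
    -- the conjugating circle maps
    set T : AddCircle (1:ℝ) → AddCircle (1:ℝ) := fun q => π (b (ψ q)) with hTdef
    set S : AddCircle (1:ℝ) → AddCircle (1:ℝ) := fun q => π (b⁻¹ (ψ q)) with hSdef
    have hπmeas : Measurable π :=
      AddCircle.measurable_mk'.comp ((measurable_id.sub_const l).div_const (r-l))
    have hψmeas : Measurable ψ :=
      measurable_const.add (measurable_const.mul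
        (measurable_subtype_coe.comp (measurableEquivIco (1:ℝ) 0).measurable))
    have hbmeas : Measurable ⇑b := aiet_measurable hb
    have hTmeas : Measurable T := hπmeas.comp (hbmeas.comp hψmeas)
    have hSmeas : Measurable S :=
      hπmeas.comp ((perm_inv_measurable b hbmeas).comp hψmeas)
    have hconjT : ∀ q, T (q + (((m : ℝ) * α : ℝ) : AddCircle (1:ℝ)))
        = T q + (((n : ℝ) * α : ℝ) : AddCircle (1:ℝ)) := by
      intro q
      have hx : ψ q ∈ Set.Ico l r := hψmem q
      obtain ⟨hmem1, hπ1⟩ := F3 m (ψ q) hx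
      have h1 : ψ (q + (((m : ℝ) * α : ℝ) : AddCircle (1:ℝ))) = (a ^ m) (ψ q) := by
        have h2 : π ((a ^ m) (ψ q)) = q + (((m : ℝ) * α : ℝ) : AddCircle (1:ℝ)) := by
          rw [hπ1, hπψ]
        rw [← h2, hψπ _ hmem1]
      show π (b (ψ (q + _))) = π (b (ψ q)) + _
      rw [h1, hrel1 (ψ q)]
      obtain ⟨hmem2, hπ2⟩ := F3 n (b (ψ q)) (hbIco _ hx)
      rw [hπ2]
    have hconjS : ∀ q, S (q + (((n : ℝ) * α : ℝ) : AddCircle (1:ℝ)))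
        = S q + (((m : ℝ) * α : ℝ) : AddCircle (1:ℝ)) := by
      intro q
      have hx : ψ q ∈ Set.Ico l r := hψmem q
      obtain ⟨hmem1, hπ1⟩ := F3 n (ψ q) hx
      have h1 : ψ (q + (((n : ℝ) * α : ℝ) : AddCircle (1:ℝ))) = (a ^ n) (ψ q) := by
        have h2 : π ((a ^ n) (ψ q)) = q + (((n : ℝ) * α : ℝ) : AddCircle (1:ℝ)) := by
          rw [hπ1, hπψ]
        rw [← h2, hψπ _ hmem1]
      show π (b⁻¹ (ψ (q + _))) = π (b⁻¹ (ψ q)) + _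
      rw [h1, ← hrel2 (ψ q)]
      obtain ⟨hmem2, hπ2⟩ := F3 m (b⁻¹ (ψ q)) (hbinvIco _ hx)
      rw [hπ2]
    obtain ⟨k, hk⟩ := key _ _ T hTmeas hconjT
    have hkm : k * m = n := by
      apply coe_mul_eq hα
      rw [show (((k * m : ℤ):ℝ) : ℝ) * α = (k : ℤ) • ((m:ℝ) * α) by push_cast [zsmul_eq_mul]; ring]
      rw [AddCircle.coe_zsmul, hk]
    obtain ⟨k', hk'⟩ := key _ _ S hSmeas hconjS
    have hkn : k' * n = m := by
      apply coe_mul_eq hα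
      rw [show (((k' * n : ℤ):ℝ) : ℝ) * α = (k' : ℤ) • ((n:ℝ) * α) by push_cast [zsmul_eq_mul]; ring]
      rw [AddCircle.coe_zsmul, hk']
    exact numk hkm hkn
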